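/- Let H be a Hilbert algebra with supremum. Then for all a₁,…,aₙ,b₁,…,bₙ ∈ H (n ≥ 1): (φ(a₁) ∩ ⋯ ∩ φ(aₙ)) ∪ (φ(b₁) ∩ ⋯ ∩ φ(bₙ)) = ⋂_{1 ≤ i,j ≤ n} φ(aᵢ ∨ bⱼ). Consequently FC(H) is closed under binary unions. -/

import Mathlib

/-- A Hilbert algebra `(H, →, 1)`. -/
structure HilbertAlgebra (H : Type*) where
  imp : H → H → H
  one : H
  ax1 : ∀ a b : H, imp a (imp b a) = one
  ax2 : ∀ a b c : H, imp (imp a (imp b c)) (imp (imp a b) (imp a c)) = one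
  ax3 : ∀ a b : H, imp a b = one → imp b a = one → a = b

namespace HilbertAlgebra

variable {H : Type*} (hH : HilbertAlgebra H)

/-- The natural order: `a ≤ b` iff `a → b = 1`. -/
def le (a b : H) : Prop := hH.imp a b = hH.one

/-- Implicative filter. -/
def IsImplicativeFilter (F : Set H) : Prop :=
  hH.one ∈ F ∧ ∀ a b : H, a ∈ F → hH.imp a b ∈ F → b ∈ F

/-- Irreducible implicative filter. -/
def IsIrreducible (F : Set H) : Prop :=
  hH.IsImplicativeFilter F ∧ F ≠ Set.univ ∧
    ∀ F₁ F₂ : Set H, hH.IsImplicativeFilter F₁ → hH.IsImplicativeFilter F₂ →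
      F = F₁ ∩ F₂ → (F = F₁ ∨ F = F₂)

/-- Order-ideal: nonempty, downward closed, up-directed (w.r.t. the natural order). -/
def IsOrderIdeal (I : Set H) : Prop :=
  I.Nonempty ∧ (∀ a b : H, b ∈ I → hH.le a b → a ∈ I) ∧
    ∀ a b : H, a ∈ I → b ∈ I → ∃ c ∈ I, hH.le a c ∧ hH.le b c

/-- `φ(a) = {P ∈ X(H) : a ∈ P}`. -/
def phi (a : H) : Set (Set H) := {P | hH.IsIrreducible P ∧ a ∈ P}

/-- An upset of `X(H)` (the poset of irreducible implicative filters, ordered by `⊆`). -/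
def IsUpsetX (U : Set (Set H)) : Prop :=
  (∀ P ∈ U, hH.IsIrreducible P) ∧
    ∀ P Q : Set H, P ∈ U → hH.IsIrreducible Q → P ⊆ Q → Q ∈ U

/-- The Heyting implication `U ⇒ V` on upsets of `X(H)`. -/
def impUps (U V : Set (Set H)) : Set (Set H) :=
  {P | hH.IsIrreducible P ∧ ∀ Q : Set H, hH.IsIrreducible Q → P ⊆ Q → Q ∈ U → Q ∈ V}

/-- `FC(H)`: finite nonempty intersections of sets of the form `φ(a)`. -/
def FC : Set (Set (Set H)) :=
  {U | ∃ l : List H, l ≠ [] ∧ U = ⋂ a ∈ l, hH.phi a}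

/-- `X*(H)`: implicative filters that are intersections of finitely many (at least one)
irreducible implicative filters. -/
def XStar : Set (Set H) :=
  {F | ∃ S : Set (Set H), S.Finite ∧ S.Nonempty ∧ (∀ P ∈ S, hH.IsIrreducible P) ∧ F = ⋂₀ S}

/-- `Φ(a) = {F ∈ X*(H) : a ∈ F}`. -/
def Phi (a : H) : Set (Set H) := {F | F ∈ hH.XStar ∧ a ∈ F}

/-- An upset of `X*(H)` (ordered by `⊆`). -/
def IsUpsetXStar (U : Set (Set H)) : Prop :=
  (∀ F ∈ U, F ∈ hH.XStar) ∧
    ∀ F K : Set H, F ∈ U → K ∈ hH.XStar → F ⊆ K → K ∈ U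

/-- The implication `U ⇒ V` on upsets of `X*(H)`. -/
def impUpsStar (U V : Set (Set H)) : Set (Set H) :=
  {F | F ∈ hH.XStar ∧ ∀ K : Set H, K ∈ hH.XStar → F ⊆ K → K ∈ U → K ∈ V}

/-- Homomorphism of Hilbert algebras. -/
def IsHom {G : Type*} (hG : HilbertAlgebra G) (f : H → G) : Prop :=
  f hH.one = hG.one ∧ ∀ a b : H, f (hH.imp a b) = hG.imp (f a) (f b)

end HilbertAlgebra

/-- A Hilbert algebra with supremum: `(H, ∨)` is a join-semilattice whose induced
order has greatest element `1`, and `a → b = 1` iff `a ∨ b = b`. -/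
structure HilbertSup (H : Type*) extends HilbertAlgebra H where
  sup : H → H → H
  sup_comm : ∀ a b : H, sup a b = sup b a
  sup_assoc : ∀ a b c : H, sup (sup a b) c = sup a (sup b c)
  sup_idem : ∀ a : H, sup a a = a
  sup_one : ∀ a : H, sup a one = one
  imp_eq_one_iff : ∀ a b : H, imp a b = one ↔ sup a b = b

/-- Morphism of Hilbert algebras with supremum. -/
def HilbertSup.IsHomSup {H G : Type*} (hH : HilbertSup H) (hG : HilbertSup G)
    (f : H → G) : Prop :=
  hH.toHilbertAlgebra.IsHom hG.toHilbertAlgebra f ∧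
    ∀ a b : H, f (hH.sup a b) = hG.sup (f a) (f b)

/-- An implicative semilattice: a meet-semilattice with greatest element and a binary
operation `him` such that `a ⊓ b ≤ c ↔ a ≤ him b c`. -/
class ImplicativeSemilattice (G : Type*) extends SemilatticeInf G, OrderTop G where
  him : G → G → G
  inf_le_iff_le_him : ∀ a b c : G, a ⊓ b ≤ c ↔ a ≤ him b c

namespace HilbertAlgebra

variable {H : Type*} (hH : HilbertAlgebra H)

lemma mp_one {b : H} (h : hH.imp hH.one b = hH.one) : b = hH.one := by
  have h1 := hH.ax1 b hH.one
  rw [h] at h1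
  exact hH.ax3 b hH.one h1 h

lemma self (a : H) : hH.imp a a = hH.one := by
  have h := hH.ax2 a (hH.imp a a) a
  rw [hH.ax1 a (hH.imp a a)] at h
  have h2 := hH.mp_one h
  rw [hH.ax1 a a] at h2
  exact hH.mp_one h2

lemma imp_one (a : H) : hH.imp a hH.one = hH.one :=
  hH.mp_one (hH.ax1 hH.one a)

lemma trans {x y z : H} (h1 : hH.imp x y = hH.one) (h2 : hH.imp y z = hH.one) :
    hH.imp x z = hH.one := by
  have h := hH.ax2 x y z
  rw [h2, hH.imp_one] at h
  have h' := hH.mp_one h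
  rw [h1] at h'
  exact hH.mp_one h'

lemma thmT (a b : H) : hH.imp a (hH.imp (hH.imp a b) b) = hH.one := by
  have h := hH.ax2 (hH.imp a b) a b
  rw [hH.self (hH.imp a b)] at h
  exact hH.trans (hH.ax1 a (hH.imp a b)) (hH.mp_one h)

lemma one_imp (a : H) : hH.imp hH.one a = a := by
  have h := hH.thmT hH.one a
  have h1 := hH.mp_one h
  exact hH.ax3 _ _ h1 (hH.ax1 a hH.one)

lemma mono {y z : H} (x : H) (h : hH.imp y z = hH.one) :
    hH.imp (hH.imp x y) (hH.imp x z) = hH.one := by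
  have h2 := hH.ax2 x y z
  rw [h, hH.imp_one, hH.one_imp] at h2
  exact h2

lemma anti {x y : H} (z : H) (h : hH.imp x y = hH.one) :
    hH.imp (hH.imp y z) (hH.imp x z) = hH.one := by
  have h2 := hH.ax2 x y z
  rw [h, hH.one_imp] at h2
  exact hH.trans (hH.ax1 (hH.imp y z) x) h2

lemma exchange (a b c : H) : hH.imp a (hH.imp b c) = hH.imp b (hH.imp a c) :=
  hH.ax3 _ _ (hH.trans (hH.ax2 a b c) (hH.anti _ (hH.ax1 b a)))
    (hH.trans (hH.ax2 b a c) (hH.anti _ (hH.ax1 a b)))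

lemma filt_up {F : Set H} (hF : hH.IsImplicativeFilter F) {a b : H}
    (ha : a ∈ F) (h : hH.imp a b = hH.one) : b ∈ F :=
  hF.2 a b ha (h ▸ hF.1)

end HilbertAlgebra

namespace HilbertSup

variable {H : Type*} (hS : HilbertSup H)

lemma le_sup_left (a b : H) : hS.imp a (hS.sup a b) = hS.one := by
  rw [hS.imp_eq_one_iff, ← hS.sup_assoc, hS.sup_idem]

lemma le_sup_right (a b : H) : hS.imp b (hS.sup a b) = hS.one := by
  rw [hS.imp_eq_one_iff, hS.sup_comm a b, ← hS.sup_assoc, hS.sup_idem]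

lemma sup_le {a b c : H} (h1 : hS.imp a c = hS.one) (h2 : hS.imp b c = hS.one) :
    hS.imp (hS.sup a b) c = hS.one := by
  rw [hS.imp_eq_one_iff] at h1 h2 ⊢
  rw [hS.sup_assoc, h2, h1]

lemma keyK (a b c : H) :
    hS.imp (hS.imp a c) (hS.imp (hS.imp b c)
      (hS.imp (hS.sup a b) c)) = hS.one := by
  set h := hS.toHilbertAlgebra
  have ha : h.imp a (h.imp (h.imp a c) (h.imp (h.imp b c) c)) = h.one :=
    h.trans (h.thmT a c) (h.mono _ (h.ax1 c (h.imp b c)))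
  have hb : h.imp b (h.imp (h.imp a c) (h.imp (h.imp b c) c)) = h.one :=
    h.trans (h.thmT b c) (h.ax1 (h.imp (h.imp b c) c) (h.imp a c))
  have hs := hS.sup_le ha hb
  show h.imp (h.imp a c) (h.imp (h.imp b c) (h.imp (hS.sup a b) c)) = h.one
  rw [h.exchange (h.imp b c) (hS.sup a b) c,
      h.exchange (h.imp a c) (hS.sup a b) (h.imp (h.imp b c) c)]
  exact hs

lemma mem_of_sup_mem {P : Set H} (hP : hS.toHilbertAlgebra.IsIrreducible P)
    {a b : H} (hab : hS.sup a b ∈ P) : a ∈ P ∨ b ∈ P := by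
  set h := hS.toHilbertAlgebra with hh
  by_contra hc
  push_neg at hc
  set F1 : Set H := {x | h.imp a x ∈ P} with hF1def
  set F2 : Set H := {x | h.imp b x ∈ P} with hF2def
  have hfil : ∀ u : H, h.IsImplicativeFilter {x | h.imp u x ∈ P} := by
    intro u
    constructor
    · show h.imp u h.one ∈ P
      rw [h.imp_one]; exact hP.1.1
    · intro x y hx hxy
      have h1 := h.ax2 u x y
      have h2 := hP.1.2 _ _ hxy (h1 ▸ hP.1.1)
      exact hP.1.2 _ _ hx h2
  have hPF : ∀ u : H, P ⊆ {x | h.imp u x ∈ P} := by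
    intro u x hx
    exact h.filt_up hP.1 hx (h.ax1 x u)
  have hsub : F1 ∩ F2 ⊆ P := by
    rintro x ⟨hx1, hx2⟩
    have hk := hS.keyK a b x
    have h1 : h.imp (h.imp b x) (h.imp (hS.sup a b) x) ∈ P :=
      hP.1.2 _ _ hx1 (hk ▸ hP.1.1)
    have h2 : h.imp (hS.sup a b) x ∈ P := hP.1.2 _ _ hx2 h1
    exact hP.1.2 _ _ hab h2
  have hPeq : P = F1 ∩ F2 :=
    Set.Subset.antisymm (fun x hx => ⟨hPF a hx, hPF b hx⟩) hsub
  rcases hP.2.2 F1 F2 (hfil a) (hfil b) hPeq with he | he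
  · exact hc.1 (by rw [he]; show h.imp a a ∈ P; rw [h.self]; exact hP.1.1)
  · exact hc.2 (by rw [he]; show h.imp b b ∈ P; rw [h.self]; exact hP.1.1)

lemma phi_sup (a b : H) :
    hS.toHilbertAlgebra.phi (hS.sup a b) =
      hS.toHilbertAlgebra.phi a ∪ hS.toHilbertAlgebra.phi b := by
  set h := hS.toHilbertAlgebra
  ext P
  constructor
  · rintro ⟨hP, hab⟩
    rcases hS.mem_of_sup_mem hP hab with hx | hx
    · exact Or.inl ⟨hP, hx⟩
    · exact Or.inr ⟨hP, hx⟩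
  · rintro (⟨hP, hx⟩ | ⟨hP, hx⟩)
    · exact ⟨hP, h.filt_up hP.1 hx (hS.le_sup_left a b)⟩
    · exact ⟨hP, h.filt_up hP.1 hx (hS.le_sup_right a b)⟩

end HilbertSup


theorem stmt_13 {H : Type*} (hH : HilbertSup H) :
    (∀ (n : ℕ), 1 ≤ n → ∀ a b : Fin n → H,
      ((⋂ i, hH.toHilbertAlgebra.phi (a i)) ∪ (⋂ j, hH.toHilbertAlgebra.phi (b j))) =
        ⋂ i, ⋂ j, hH.toHilbertAlgebra.phi (hH.sup (a i) (b j))) ∧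
    (∀ U V : Set (Set H), U ∈ hH.toHilbertAlgebra.FC → V ∈ hH.toHilbertAlgebra.FC →
      U ∪ V ∈ hH.toHilbertAlgebra.FC) := by
  constructor
  · intro n hn a b
    ext P
    simp only [Set.mem_union, Set.mem_iInter]
    constructor
    · rintro (hA | hB) i j
      · rw [hH.phi_sup]; exact Or.inl (hA i)
      · rw [hH.phi_sup]; exact Or.inr (hB j)
    · intro hP
      by_cases hA : ∀ i, P ∈ hH.toHilbertAlgebra.phi (a i)
      · exact Or.inl hA
      · push_neg at hA
        obtain ⟨i1, hi1⟩ := hA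
        refine Or.inr fun j => ?_
        have h2 := hP i1 j
        rw [hH.phi_sup] at h2
        exact h2.resolve_left hi1
  · rintro U V ⟨l, hl, rfl⟩ ⟨m, hm, rfl⟩
    refine ⟨l.flatMap fun x => m.map (hH.sup x), ?_, ?_⟩
    · obtain ⟨a0, ha0⟩ := List.exists_mem_of_ne_nil l hl
      obtain ⟨b0, hb0⟩ := List.exists_mem_of_ne_nil m hm
      exact List.ne_nil_of_mem
        (List.mem_flatMap.mpr ⟨a0, ha0, List.mem_map_of_mem hb0⟩)
    · ext P
      simp only [Set.mem_union, Set.mem_iInter]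
      constructor
      · rintro (hA | hB) c hc
        · obtain ⟨x, hx, y, hy, rfl⟩ := by
            simpa [List.mem_flatMap, List.mem_map] using hc
          rw [hH.phi_sup]; exact Or.inl (hA x hx)
        · obtain ⟨x, hx, y, hy, rfl⟩ := by
            simpa [List.mem_flatMap, List.mem_map] using hc
          rw [hH.phi_sup]; exact Or.inr (hB y hy)
      · intro hP
        by_cases hA : ∀ x, x ∈ l → P ∈ hH.toHilbertAlgebra.phi x
        · exact Or.inl hA
        · push_neg at hA
          obtain ⟨x0, hx0, hpx0⟩ := hA
          refine Or.inr fun y hy => ?_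
          have hmem : hH.sup x0 y ∈ l.flatMap fun x => m.map (hH.sup x) :=
            List.mem_flatMap.mpr ⟨x0, hx0, List.mem_map_of_mem hy⟩
          have h2 := hP (hH.sup x0 y) hmem
          rw [hH.phi_sup] at h2
          exact h2.resolve_left hpx0
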